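/- Suppose for each i, R_i and V_{ri} are differentiable real-valued functions with Ṙ_i = V_{ri} and V̇_{ri} = −κ₂(V_{ri} + c) − R_i, where κ₂ > 0, c ≥ 0, and μ_i is differentiable with μ̇_i = (1 + (V_{ri} + c)²)⁻¹ μ_i R_i (V_{ri} + c). Then the function V₂(t) = (1/2)Σ_i Σ_j a_{ij}[(R_i − R_j)² + (V_{ri} − V_{rj})²] + (1/2)Σ_i μ_i²(V_{ri} + c)² + (1/2)Σ_i μ_i², with nonnegative weights a_{ij}, has derivative V̇₂(t) = −κ₂ Σ_i Σ_j a_{ij}(V_{ri} − V_{rj})² − κ₂ Σ_i μ_i²(V_{ri} + c)², which is ≤ 0. -/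

import Mathlib

open Real Finset

/-- Derivative of the tangential Lyapunov function `V₂` under the closed-loop
tangential dynamics. -/
theorem V2_deriv
    (N : ℕ) (R Vr μ : Fin N → ℝ → ℝ) (a : Fin N → Fin N → ℝ)
    (κ2 c : ℝ) (hκ2 : 0 < κ2) (hc : 0 ≤ c)
    (ha : ∀ i j, 0 ≤ a i j)
    (hR : ∀ i t, HasDerivAt (R i) (Vr i t) t)
    (hVr : ∀ i t, HasDerivAt (Vr i) (-κ2 * (Vr i t + c) - R i t) t)
    (hμ : ∀ i t, HasDerivAt (μ i)
      ((1 + (Vr i t + c) ^ 2)⁻¹ * μ i t * R i t * (Vr i t + c)) t)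
    (t : ℝ) :
    HasDerivAt (fun τ =>
        (1 / 2) * ∑ i, ∑ j, a i j *
          ((R i τ - R j τ) ^ 2 + (Vr i τ - Vr j τ) ^ 2)
        + (1 / 2) * ∑ i, (μ i τ) ^ 2 * (Vr i τ + c) ^ 2
        + (1 / 2) * ∑ i, (μ i τ) ^ 2)
      (-κ2 * ∑ i, ∑ j, a i j * (Vr i t - Vr j t) ^ 2
        - κ2 * ∑ i, (μ i t) ^ 2 * (Vr i t + c) ^ 2) t ∧
    (-κ2 * ∑ i, ∑ j, a i j * (Vr i t - Vr j t) ^ 2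
        - κ2 * ∑ i, (μ i t) ^ 2 * (Vr i t + c) ^ 2) ≤ 0 := by
  have hne : ∀ i : Fin N, (1 + (Vr i t + c) ^ 2) ≠ 0 := fun i => by positivity
  constructor
  · have h1 : HasDerivAt
        (fun τ => ∑ i, ∑ j, a i j * ((R i τ - R j τ) ^ 2 + (Vr i τ - Vr j τ) ^ 2))
        (∑ i, ∑ j, a i j * (-2 * κ2 * (Vr i t - Vr j t) ^ 2)) t := by
      apply HasDerivAt.fun_sum; intro i _
      apply HasDerivAt.fun_sum; intro j _
      have h := ((((hR i t).fun_sub (hR j t)).pow 2).fun_add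
        ((((hVr i t).fun_sub (hVr j t))).pow 2)).const_mul (a i j)
      refine h.congr_deriv ?_
      ring
    have h2 : HasDerivAt (fun τ => ∑ i, (μ i τ) ^ 2 * (Vr i τ + c) ^ 2)
        (∑ i, ((2 * μ i t ^ (2-1) * ((1 + (Vr i t + c) ^ 2)⁻¹ * μ i t * R i t * (Vr i t + c)))
            * (Vr i t + c) ^ 2
          + μ i t ^ 2 * (2 * (Vr i t + c) ^ (2-1) * (-κ2 * (Vr i t + c) - R i t)))) t := by
      apply HasDerivAt.fun_sum; intro i _
      exact ((hμ i t).pow 2).mul (((hVr i t).add_const c).pow 2)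
    have h3 : HasDerivAt (fun τ => ∑ i, (μ i τ) ^ 2)
        (∑ i, (2 * μ i t ^ (2-1) * ((1 + (Vr i t + c) ^ 2)⁻¹ * μ i t * R i t * (Vr i t + c)))) t := by
      apply HasDerivAt.fun_sum; intro i _
      exact (hμ i t).pow 2
    have h := ((h1.const_mul ((1:ℝ)/2)).fun_add (h2.const_mul ((1:ℝ)/2))).fun_add (h3.const_mul ((1:ℝ)/2))
    refine h.congr_deriv ?_
    have e1 : (1/2 : ℝ) * ∑ i, ∑ j, a i j * (-2 * κ2 * (Vr i t - Vr j t) ^ 2)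
        = -κ2 * ∑ i, ∑ j, a i j * (Vr i t - Vr j t) ^ 2 := by
      rw [Finset.mul_sum, Finset.mul_sum]
      refine Finset.sum_congr rfl fun i _ => ?_
      rw [Finset.mul_sum, Finset.mul_sum]
      exact Finset.sum_congr rfl fun j _ => by ring
    have e2 : (1/2 : ℝ) * ∑ i, ((2 * μ i t ^ (2-1) * ((1 + (Vr i t + c) ^ 2)⁻¹ * μ i t * R i t * (Vr i t + c)))
            * (Vr i t + c) ^ 2
          + μ i t ^ 2 * (2 * (Vr i t + c) ^ (2-1) * (-κ2 * (Vr i t + c) - R i t)))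
        + (1/2 : ℝ) * ∑ i, (2 * μ i t ^ (2-1) * ((1 + (Vr i t + c) ^ 2)⁻¹ * μ i t * R i t * (Vr i t + c)))
        = -κ2 * ∑ i, (μ i t) ^ 2 * (Vr i t + c) ^ 2 := by
      rw [Finset.mul_sum, Finset.mul_sum, Finset.mul_sum, ← Finset.sum_add_distrib]
      refine Finset.sum_congr rfl fun i _ => ?_
      have := hne i
      field_simp
      ring
    linarith [e1, e2]
  · have hS : (0:ℝ) ≤ ∑ i, ∑ j, a i j * (Vr i t - Vr j t) ^ 2 :=
      Finset.sum_nonneg fun i _ => Finset.sum_nonneg fun j _ =>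
        mul_nonneg (ha i j) (sq_nonneg _)
    have hS' : (0:ℝ) ≤ ∑ i, (μ i t) ^ 2 * (Vr i t + c) ^ 2 :=
      Finset.sum_nonneg fun i _ => mul_nonneg (sq_nonneg _) (sq_nonneg _)
    nlinarith [mul_nonneg hκ2.le hS, mul_nonneg hκ2.le hS']
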